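/- Let A be a bounded operator on a complex Hilbert space H and suppose there exists T ∈ B(H) such that TA = |A| and T|A| = |A|T. Then the kernel of the operator U := P T*, where P is the orthogonal projection onto the closure of ran A, equals ker A, and A = U|A| is the polar decomposition of A provided ‖T‖ ≤ √c for some c (in particular U is a partial isometry with initial space (ker A)^⊥). -/

import Mathlib

open ContinuousLinearMap
open scoped InnerProductSpace

/-- If `TA = |A|` and `T|A| = |A|T` (with `‖T‖ ≤ √c`), and `P` is the orthogonal projection
onto the closure of `ran A`, then `U := P T*` satisfies `ker U = ker A`, `A = U|A|`, and `U`
is isometric on `(ker A)ᗮ`; i.e. `A = U|A|` is the polar decomposition of `A`. -/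
theorem polar_decomposition_from_T {H : Type*} [NormedAddCommGroup H]
    [InnerProductSpace ℂ H] [CompleteSpace H]
    (A T absA : H →L[ℂ] H)
    (habs_pos : absA.IsPositive)
    (habs_sq : absA ∘L absA = ContinuousLinearMap.adjoint A ∘L A)
    (c : ℝ)
    (hTA : T ∘L A = absA)
    (hcomm : T ∘L absA = absA ∘L T)
    (hTnorm : ‖T‖ ≤ Real.sqrt c)
    (P : H →L[ℂ] H)
    (hPmem : ∀ f, P f ∈ closure (Set.range A))
    (hPfix : ∀ f ∈ closure (Set.range A), P f = f)
    (hPsa : ContinuousLinearMap.adjoint P = P) :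
    LinearMap.ker ((P ∘L ContinuousLinearMap.adjoint T : H →L[ℂ] H) : H →ₗ[ℂ] H) = LinearMap.ker (A : H →ₗ[ℂ] H) ∧
    A = (P ∘L ContinuousLinearMap.adjoint T) ∘L absA ∧
    (∀ f ∈ (LinearMap.ker (A : H →ₗ[ℂ] H))ᗮ, ‖(P ∘L ContinuousLinearMap.adjoint T) f‖ = ‖f‖) := by
  have hsa : ContinuousLinearMap.adjoint absA = absA := by
    have := habs_pos.isSelfAdjoint; rwa [IsSelfAdjoint, ContinuousLinearMap.star_eq_adjoint] at this
  have habs_inner : ∀ x y : H, ⟪absA x, y⟫_ℂ = ⟪x, absA y⟫_ℂ := by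
    intro x y
    conv_lhs => rw [← hsa]
    rw [adjoint_inner_left]
  have h1 : ∀ x y : H, ⟪A x, A y⟫_ℂ = ⟪absA x, absA y⟫_ℂ := by
    intro x y
    calc ⟪A x, A y⟫_ℂ = ⟪x, (ContinuousLinearMap.adjoint A) (A y)⟫_ℂ :=
          (adjoint_inner_right A x (A y)).symm
      _ = ⟪x, (ContinuousLinearMap.adjoint A ∘L A) y⟫_ℂ := rfl
      _ = ⟪x, (absA ∘L absA) y⟫_ℂ := by rw [habs_sq]
      _ = ⟪x, absA (absA y)⟫_ℂ := rfl
      _ = ⟪absA x, absA y⟫_ℂ := (habs_inner x (absA y)).symm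
  have hnorm : ∀ x : H, ‖A x‖ = ‖absA x‖ := by
    intro x
    have h := h1 x x
    rw [inner_self_eq_norm_sq_to_K, inner_self_eq_norm_sq_to_K] at h
    have h2 : (‖A x‖ : ℝ) ^ 2 = (‖absA x‖ : ℝ) ^ 2 := by exact_mod_cast h
    calc ‖A x‖ = Real.sqrt (‖A x‖ ^ 2) := (Real.sqrt_sq (norm_nonneg _)).symm
      _ = Real.sqrt (‖absA x‖ ^ 2) := by rw [h2]
      _ = ‖absA x‖ := Real.sqrt_sq (norm_nonneg _)
  have hTAapp : ∀ f : H, T (A f) = absA f := fun f => congrFun (congrArg DFunLike.coe hTA) f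
  have hkerAabs : ∀ x : H, A x = 0 ↔ absA x = 0 := by
    intro x
    constructor
    · intro h
      have hx := hnorm x
      rw [h, norm_zero] at hx
      exact norm_eq_zero.mp hx.symm
    · intro h
      have hx := hnorm x
      rw [h, norm_zero] at hx
      exact norm_eq_zero.mp hx
  have hPzero : ∀ x : H, P x = 0 ↔ ∀ f : H, ⟪x, A f⟫_ℂ = 0 := by
    intro x
    constructor
    · intro h f
      have hmem : A f ∈ closure (Set.range A) := subset_closure (Set.mem_range_self f)
      calc ⟪x, A f⟫_ℂ = ⟪x, P (A f)⟫_ℂ := by rw [hPfix _ hmem]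
        _ = ⟪(ContinuousLinearMap.adjoint P) x, A f⟫_ℂ := (adjoint_inner_left P (A f) x).symm
        _ = ⟪P x, A f⟫_ℂ := by rw [hPsa]
        _ = 0 := by rw [h, inner_zero_left]
    · intro h
      have hclosed : ∀ y ∈ closure (Set.range A), ⟪x, y⟫_ℂ = 0 := by
        intro y hy
        have hmem : y ∈ {z : H | ⟪x, z⟫_ℂ = 0} := by
          refine closure_minimal ?_ ?_ hy
          · rintro _ ⟨f, rfl⟩; exact h f
          · exact isClosed_eq (Continuous.inner continuous_const continuous_id) continuous_const
        exact hmem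
      have hPP : P (P x) = P x := hPfix _ (hPmem x)
      have h0 : ⟪P x, P x⟫_ℂ = 0 := by
        calc ⟪P x, P x⟫_ℂ = ⟪(ContinuousLinearMap.adjoint P) (P x), x⟫_ℂ :=
              (adjoint_inner_left P x (P x)).symm
          _ = ⟪P x, x⟫_ℂ := by rw [hPsa, hPP]
          _ = (starRingEnd ℂ) ⟪x, P x⟫_ℂ := (inner_conj_symm _ _).symm
          _ = 0 := by rw [hclosed _ (hPmem x)]; simp
      exact inner_self_eq_zero.mp h0
  have hker : LinearMap.ker ((P ∘L ContinuousLinearMap.adjoint T : H →L[ℂ] H) : H →ₗ[ℂ] H) = LinearMap.ker (A : H →ₗ[ℂ] H) := by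
    ext h
    simp only [LinearMap.mem_ker, ContinuousLinearMap.coe_comp', Function.comp_apply,
      ContinuousLinearMap.coe_coe]
    rw [hPzero]
    constructor
    · intro hh
      have key : ∀ f : H, ⟪h, absA f⟫_ℂ = 0 := by
        intro f
        have hhf := hh f
        rwa [adjoint_inner_left, hTAapp] at hhf
      have key2 : ∀ f : H, ⟪f, absA h⟫_ℂ = 0 := by
        intro f
        calc ⟪f, absA h⟫_ℂ = ⟪absA f, h⟫_ℂ := (habs_inner f h).symm
          _ = (starRingEnd ℂ) ⟪h, absA f⟫_ℂ := (inner_conj_symm _ _).symm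
          _ = 0 := by rw [key f]; simp
      have habs0 : absA h = 0 := inner_self_eq_zero.mp (key2 (absA h))
      exact (hkerAabs h).mpr habs0
    · intro hh f
      rw [adjoint_inner_left, hTAapp, ← habs_inner, (hkerAabs h).mp hh, inner_zero_left]
  have hTiso : ∀ (f : H) (x : H), x ∈ closure (Set.range A) → ⟪T (A f), T x⟫_ℂ = ⟪A f, x⟫_ℂ := by
    intro f x hx
    have hmem : x ∈ {z : H | ⟪T (A f), T z⟫_ℂ = ⟪A f, z⟫_ℂ} := by
      refine closure_minimal ?_ ?_ hx
      · rintro _ ⟨g, rfl⟩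
        show ⟪T (A f), T (A g)⟫_ℂ = ⟪A f, A g⟫_ℂ
        rw [hTAapp, hTAapp, ← h1]
      · exact isClosed_eq
          (Continuous.inner continuous_const (T.continuous.comp continuous_id))
          (Continuous.inner continuous_const continuous_id)
    exact hmem
  have hfac : A = (P ∘L ContinuousLinearMap.adjoint T) ∘L absA := by
    ext f
    simp only [ContinuousLinearMap.coe_comp', Function.comp_apply]
    apply ext_inner_right ℂ
    intro g
    have hAf : A f ∈ closure (Set.range A) := subset_closure (Set.mem_range_self f)
    calc ⟪A f, g⟫_ℂ = ⟪P (A f), g⟫_ℂ := by rw [hPfix _ hAf]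
      _ = ⟪(ContinuousLinearMap.adjoint P) (A f), g⟫_ℂ := by rw [hPsa]
      _ = ⟪A f, P g⟫_ℂ := adjoint_inner_left P g (A f)
      _ = ⟪T (A f), T (P g)⟫_ℂ := (hTiso f _ (hPmem g)).symm
      _ = ⟪absA f, T (P g)⟫_ℂ := by rw [hTAapp]
      _ = ⟪(ContinuousLinearMap.adjoint T) (absA f), P g⟫_ℂ := by rw [adjoint_inner_left]
      _ = ⟪(ContinuousLinearMap.adjoint P) ((ContinuousLinearMap.adjoint T) (absA f)), g⟫_ℂ :=
          (adjoint_inner_left P g _).symm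
      _ = ⟪P ((ContinuousLinearMap.adjoint T) (absA f)), g⟫_ℂ := by rw [hPsa]
  refine ⟨hker, hfac, ?_⟩
  intro f hf
  set U := P ∘L ContinuousLinearMap.adjoint T with hU
  have hkersub : LinearMap.ker (A : H →ₗ[ℂ] H) = LinearMap.ker (absA : H →ₗ[ℂ] H) := by
    ext x; simpa using hkerAabs x
  have hkerabs : LinearMap.ker (absA : H →ₗ[ℂ] H) = (LinearMap.range (absA : H →ₗ[ℂ] H))ᗮ := by
    ext x
    constructor
    · intro hx u hu
      obtain ⟨y, rfl⟩ := hu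
      rw [ContinuousLinearMap.coe_coe, habs_inner]
      simp only [LinearMap.mem_ker] at hx
      rw [show absA x = 0 from hx, inner_zero_right]
    · intro hx
      have hall : ∀ y : H, ⟪y, absA x⟫_ℂ = 0 := by
        intro y
        have h := hx (absA y) ⟨y, rfl⟩
        rwa [habs_inner] at h
      have h2 : absA x = 0 := inner_self_eq_zero.mp (hall (absA x))
      exact h2
  have hfmem : f ∈ closure (Set.range absA) := by
    have h2 : (LinearMap.ker (A : H →ₗ[ℂ] H))ᗮ = (LinearMap.range (absA : H →ₗ[ℂ] H)).topologicalClosure := by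
      rw [hkersub, hkerabs, Submodule.orthogonal_orthogonal_eq_closure]
    rw [h2] at hf
    have h3 : f ∈ closure ((LinearMap.range (absA : H →ₗ[ℂ] H)) : Set H) := by
      rw [← Submodule.topologicalClosure_coe]; exact hf
    have h4 : ((LinearMap.range (absA : H →ₗ[ℂ] H)) : Set H) = Set.range absA := by
      ext y; simp [LinearMap.mem_range]
    rwa [h4] at h3
  have hUiso : ∀ x ∈ closure (Set.range absA), ‖U x‖ = ‖x‖ := by
    intro x hx
    have hmem : x ∈ {z : H | ‖U z‖ = ‖z‖} := by
      refine closure_minimal ?_ ?_ hx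
      · rintro _ ⟨g, rfl⟩
        show ‖U (absA g)‖ = ‖absA g‖
        have hUg : U (absA g) = A g := by
          rw [← ContinuousLinearMap.comp_apply, ← hfac]
        rw [hUg, hnorm]
      · exact isClosed_eq (continuous_norm.comp U.continuous) continuous_norm
    exact hmem
  exact hUiso f hfmem
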